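/- arXiv:1902.07644 — 3 statements merged into one kernel-verified Lean document; each statement's English description precedes it below -/
import Mathlib

section
/- Area-level multi-input LQR lower bound: Let n ≥ 1, let q > 0, let R be an n×n real symmetric positive definite matrix, and set s = 𝟙ᵀ R⁻¹ 𝟙 where 𝟙 ∈ ℝⁿ is the all-ones vector. Let z : ℝ → ℝ be differentiable on [0, ∞) and u : ℝ → ℝⁿ be continuous with z'(t) = 𝟙ᵀ u(t) for all t ≥ 0, z(t) → 0 as t → ∞, and t ↦ q z(t)² + u(t)ᵀ R u(t) integrable on [0, ∞). Then ∫₀^∞ (q z(t)² + u(t)ᵀ R u(t)) dt ≥ √(q / s) · z(0)². -/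
open Set Filter MeasureTheory Matrix

/-- Area-level multi-input LQR lower bound: with `z' = 𝟙ᵀ u`, `z → 0`,
`R` symmetric positive definite, `s = 𝟙ᵀ R⁻¹ 𝟙`, and the running cost
`q z² + uᵀ R u` integrable on `[0, ∞)`, the total cost is at least
`√(q / s) z(0)²`. -/
theorem area_LQR_lower_bound
    (n : ℕ) (hn : 1 ≤ n)
    (q : ℝ) (hq : 0 < q)
    (R : Matrix (Fin n) (Fin n) ℝ) (hR : R.PosDef) (hRsymm : R.IsSymm)
    (s : ℝ) (hs : s = (fun _ => (1:ℝ)) ⬝ᵥ R⁻¹.mulVec (fun _ => (1:ℝ)))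
    (z : ℝ → ℝ) (u : ℝ → Fin n → ℝ) (hu : Continuous u)
    (hz : ∀ t ∈ Ici (0:ℝ), HasDerivWithinAt z ((fun _ => (1:ℝ)) ⬝ᵥ u t) (Ici 0) t)
    (hz0 : Tendsto z atTop (nhds 0))
    (hint : IntegrableOn (fun t => q * (z t) ^ 2 + u t ⬝ᵥ R.mulVec (u t)) (Ici 0)) :
    Real.sqrt (q / s) * (z 0) ^ 2 ≤
      ∫ t in Ici (0:ℝ), (q * (z t) ^ 2 + u t ⬝ᵥ R.mulVec (u t)) := by
  classical
  set e : Fin n → ℝ := fun _ => (1:ℝ) with he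
  have he0 : e ≠ 0 := by
    intro h
    have := congrFun h ⟨0, hn⟩
    simp [e] at this
  have hRinv : (R⁻¹).PosDef := hR.inv
  -- s > 0
  have hs0 : 0 < s := by
    have := hRinv.re_dotProduct_pos he0
    simpa [hs, he] using this
  have hsne : s ≠ 0 := ne_of_gt hs0
  -- R * R⁻¹ = 1
  have hRRinv : R * R⁻¹ = 1 := Matrix.mul_nonsing_inv R hR.det_pos.ne'.isUnit
  -- Cauchy–Schwarz: (e ⬝ᵥ w)² ≤ s * (w ⬝ᵥ R w)
  have hCS : ∀ w : Fin n → ℝ, (e ⬝ᵥ w) ^ 2 ≤ s * (w ⬝ᵥ R.mulVec w) := by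
    intro w
    set c : ℝ := (e ⬝ᵥ w) / s with hc
    set v : Fin n → ℝ := w - c • (R⁻¹.mulVec e) with hv
    have hRe : R.mulVec (R⁻¹.mulVec e) = e := by
      rw [Matrix.mulVec_mulVec, hRRinv, Matrix.one_mulVec]
    have h1 : (R⁻¹.mulVec e) ⬝ᵥ R.mulVec w = e ⬝ᵥ w := by
      rw [Matrix.dotProduct_mulVec, ← Matrix.mulVec_transpose, hRsymm.eq, hRe]
    have h2 : (R⁻¹.mulVec e) ⬝ᵥ e = s := by
      rw [dotProduct_comm, hs]
    have h3 : w ⬝ᵥ e = e ⬝ᵥ w := dotProduct_comm _ _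
    have hexp : v ⬝ᵥ R.mulVec v = w ⬝ᵥ R.mulVec w - (e ⬝ᵥ w) ^ 2 / s := by
      rw [hv]
      rw [Matrix.mulVec_sub, Matrix.mulVec_smul, hRe, sub_dotProduct,
        dotProduct_sub, dotProduct_sub, smul_dotProduct, smul_dotProduct,
        dotProduct_smul, dotProduct_smul, h1, h2, h3]
      field_simp [hc]
      linear_combination (c * s - e ⬝ᵥ w) * (div_mul_cancel₀ (e ⬝ᵥ w) hsne : c * s = e ⬝ᵥ w)
    have hnn : 0 ≤ v ⬝ᵥ R.mulVec v := hR.posSemidef.re_dotProduct_nonneg v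
    rw [hexp] at hnn
    have := (div_le_iff₀ hs0).mp (by linarith : (e ⬝ᵥ w) ^ 2 / s ≤ w ⬝ᵥ R.mulVec w)
    linarith [this]
  -- abbreviations
  set k : ℝ := Real.sqrt (q / s) with hk
  have hk0 : 0 < k := Real.sqrt_pos.mpr (div_pos hq hs0)
  have hk2 : k ^ 2 = q / s := Real.sq_sqrt (le_of_lt (div_pos hq hs0))
  set cost : ℝ → ℝ := fun t => q * (z t) ^ 2 + u t ⬝ᵥ R.mulVec (u t) with hcost
  set w : ℝ → ℝ := fun t => e ⬝ᵥ u t with hw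
  -- pointwise: -2 k z z' ≤ cost
  have hpt : ∀ t, -(k * (2 * z t * w t)) ≤ cost t := by
    intro t
    have h1 : (w t) ^ 2 / s ≤ u t ⬝ᵥ R.mulVec (u t) := by
      have := hCS (u t)
      rw [div_le_iff₀ hs0]; linarith
    have h2 : -(k * (2 * z t * w t)) ≤ q * (z t) ^ 2 + (w t) ^ 2 / s := by
      have hks : k ^ 2 * s = q := by rw [hk2]; field_simp
      rw [← sub_nonneg]
      have heq : q * (z t) ^ 2 + (w t) ^ 2 / s - -(k * (2 * z t * w t))
          = (k * s * z t + w t) ^ 2 / s := by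
        field_simp
        linear_combination (-(z t ^ 2 * s)) * hks
      rw [heq]
      positivity
    simp only [hcost]
    linarith
  -- continuity facts
  have hzc : ContinuousOn z (Ici 0) := fun t ht => (hz t ht).continuousWithinAt
  have hwc : Continuous w := by
    have : w = fun t => ∑ i, e i * u t i := by
      funext t; rfl
    rw [this]
    exact continuous_finset_sum _ fun i _ =>
      continuous_const.mul ((continuous_apply i).comp hu)
  -- cost is nonnegative on Ici 0
  have hcost0 : ∀ t, 0 ≤ cost t := fun t =>
    add_nonneg (mul_nonneg hq.le (sq_nonneg _)) (hR.posSemidef.re_dotProduct_nonneg _)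
  -- main estimate on [0, T]
  have key : ∀ T : ℝ, 0 ≤ T →
      k * z 0 ^ 2 - k * z T ^ 2 ≤ ∫ t in Ici (0:ℝ), cost t := by
    intro T hT
    set g : ℝ → ℝ := fun t => -(k * z t ^ 2) with hg
    have hgc : ContinuousOn g (Icc 0 T) :=
      ((hzc.mono Icc_subset_Ici_self).pow 2).const_smul k |>.neg
    have hgd : ∀ x ∈ Ioo (0:ℝ) T, HasDerivWithinAt g (-(k * (2 * z x * w x))) (Ioi x) x := by
      intro x hx
      have hx0 : x ∈ Ici (0:ℝ) := le_of_lt hx.1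
      have h1 : HasDerivWithinAt z (w x) (Ioi x) x :=
        (hz x hx0).mono (fun y hy => le_of_lt (lt_of_le_of_lt hx.1.le hy))
      have h2 : HasDerivWithinAt (fun t => z t ^ 2) (2 * z x * w x) (Ioi x) x := by
        have := h1.fun_pow 2
        exact this.congr_deriv (by push_cast; ring)
      exact (h2.const_mul k).neg
    have hφint : IntegrableOn cost (Icc 0 T) :=
      hint.mono_set (Icc_subset_Ici_self)
    have hφg : ∀ x ∈ Ioo (0:ℝ) T, -(k * (2 * z x * w x)) ≤ cost x := fun x _ => hpt x
    have := intervalIntegral.sub_le_integral_of_hasDeriv_right_of_le hT hgc hgd hφint hφg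
    have hIoc : (∫ t in (0:ℝ)..T, cost t) = ∫ t in Ioc (0:ℝ) T, cost t :=
      intervalIntegral.integral_of_le hT
    have hmono : (∫ t in Ioc (0:ℝ) T, cost t) ≤ ∫ t in Ici (0:ℝ), cost t := by
      apply setIntegral_mono_set hint
      · exact Filter.Eventually.of_forall fun t => hcost0 t
      · exact HasSubset.Subset.eventuallyLE (fun t ht => le_of_lt ht.1)
    have hgTg0 : g T - g 0 = k * z 0 ^ 2 - k * z T ^ 2 := by simp only [hg]; ring
    calc k * z 0 ^ 2 - k * z T ^ 2 = g T - g 0 := hgTg0.symm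
      _ ≤ ∫ t in (0:ℝ)..T, cost t := this
      _ = ∫ t in Ioc (0:ℝ) T, cost t := hIoc
      _ ≤ ∫ t in Ici (0:ℝ), cost t := hmono
  -- take the limit T → ∞
  have hlim : Tendsto (fun T => k * z 0 ^ 2 - k * z T ^ 2) atTop
      (nhds (k * z 0 ^ 2)) := by
    have : Tendsto (fun T => k * z T ^ 2) atTop (nhds (k * 0 ^ 2)) :=
      (tendsto_const_nhds.mul (hz0.pow 2))
    simpa using tendsto_const_nhds.sub this
  have := le_of_tendsto hlim (by
    filter_upwards [eventually_ge_atTop (0:ℝ)] with T hT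
    exact key T hT)
  simpa [hk, hcost, mul_comm] using this
end

section
/- Area-level multi-input LQR achievability: Let n ≥ 1, q > 0, R an n×n real symmetric positive definite matrix, s = 𝟙ᵀ R⁻¹ 𝟙 > 0 with 𝟙 the all-ones vector, and z₀ ∈ ℝ. Define z(t) = z₀ e^{-√(q s) t} and u(t) = -√(q/s) · z(t) · R⁻¹ 𝟙 for t ≥ 0. Then z'(t) = 𝟙ᵀ u(t) for all t ≥ 0, z(0) = z₀, z(t) → 0 as t → ∞, and ∫₀^∞ (q z(t)² + u(t)ᵀ R u(t)) dt = √(q / s) · z₀². -/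
open Set Filter MeasureTheory Matrix

lemma integral_exp_neg_mul_Ioi_zero {b : ℝ} (hb : 0 < b) :
    ∫ x in Ioi (0:ℝ), Real.exp (-b * x) = 1 / b := by
  have hderiv : ∀ x ∈ Ici (0:ℝ),
      HasDerivAt (fun x => -Real.exp (-b * x) / b) (Real.exp (-b * x)) x := by
    intro x _
    have h1 : HasDerivAt (fun x : ℝ => -b * x) (-b) x := by
      simpa using (hasDerivAt_id x).const_mul (-b)
    have h2 := (h1.exp).neg.div_const b
    refine h2.congr_deriv ?_
    field_simp
  have hint : IntegrableOn (fun x => Real.exp (-b * x)) (Ioi (0:ℝ)) :=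
    exp_neg_integrableOn_Ioi 0 hb
  have htend : Tendsto (fun x => -Real.exp (-b * x) / b) atTop (nhds 0) := by
    have hm : Tendsto (fun x : ℝ => -b * x) atTop atBot :=
      tendsto_id.const_mul_atTop_of_neg (neg_neg_iff_pos.mpr hb)
    have := Real.tendsto_exp_atBot.comp hm
    simpa using (this.neg.div_const b)
  have := integral_Ioi_of_hasDerivAt_of_tendsto' hderiv hint htend
  simp only [mul_zero, neg_zero, Real.exp_zero] at this
  rw [this]; ring

/-- Area-level multi-input LQR achievability: with `s = 𝟙ᵀ R⁻¹ 𝟙 > 0`,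
`z t = z₀ e^{-√(q s) t}` and `u t = -√(q/s) z t • R⁻¹ 𝟙`, one has
`z' = 𝟙ᵀ u`, `z 0 = z₀`, `z → 0`, and total cost exactly `√(q / s) z₀²`. -/
theorem area_LQR_achievability
    (n : ℕ) (hn : 1 ≤ n)
    (q : ℝ) (hq : 0 < q)
    (R : Matrix (Fin n) (Fin n) ℝ) (hR : R.PosDef) (hRsymm : R.IsSymm)
    (s : ℝ) (hs : s = (fun _ => (1:ℝ)) ⬝ᵥ R⁻¹.mulVec (fun _ => (1:ℝ))) (hspos : 0 < s)
    (z₀ : ℝ)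
    (z : ℝ → ℝ) (hzdef : ∀ t : ℝ, z t = z₀ * Real.exp (-Real.sqrt (q * s) * t))
    (u : ℝ → Fin n → ℝ)
    (hudef : ∀ t : ℝ, u t = (-Real.sqrt (q / s) * z t) • R⁻¹.mulVec (fun _ => (1:ℝ))) :
    (∀ t ≥ (0:ℝ), HasDerivAt z ((fun _ => (1:ℝ)) ⬝ᵥ u t) t) ∧
    z 0 = z₀ ∧
    Tendsto z atTop (nhds 0) ∧
    ∫ t in Ici (0:ℝ), (q * (z t) ^ 2 + u t ⬝ᵥ R.mulVec (u t)) =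
      Real.sqrt (q / s) * z₀ ^ 2 := by
  set c := Real.sqrt (q * s) with hc
  set k := Real.sqrt (q / s) with hk
  have hcpos : 0 < c := Real.sqrt_pos.mpr (mul_pos hq hspos)
  have hkpos : 0 < k := Real.sqrt_pos.mpr (div_pos hq hspos)
  have hck : c * k = q := by
    rw [hc, hk, ← Real.sqrt_mul (mul_pos hq hspos).le]
    have : q * s * (q / s) = q ^ 2 := by field_simp
    rw [this, Real.sqrt_sq hq.le]
  have hk2 : k * k = q / s := Real.mul_self_sqrt (div_pos hq hspos).le
  have hks : k * s = c := by
    have h1 : c * (k * s) = c * c := by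
      rw [← mul_assoc, hck]
      rw [hc, Real.mul_self_sqrt (mul_pos hq hspos).le]
    exact mul_left_cancel₀ hcpos.ne' h1
  -- vector facts
  set one : Fin n → ℝ := (fun _ => (1:ℝ)) with hone
  set w : Fin n → ℝ := R⁻¹.mulVec one with hw
  have hdet : IsUnit R.det := isUnit_iff_ne_zero.mpr hR.det_pos.ne'
  have hRw : R.mulVec w = one := by
    rw [hw, Matrix.mulVec_mulVec, Matrix.mul_nonsing_inv R hdet, Matrix.one_mulVec]
  have hwRw : w ⬝ᵥ R.mulVec w = s := by
    rw [hRw, dotProduct_comm, hs]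
  have hones : one ⬝ᵥ w = s := hs.symm
  -- dot product of ones with u
  have hdot : ∀ t, one ⬝ᵥ u t = -c * z t := by
    intro t
    rw [hudef t, dotProduct_smul, smul_eq_mul, hones]
    rw [← hks]; ring
  refine ⟨?_, ?_, ?_, ?_⟩
  · -- derivative
    intro t _
    have hz : z = fun t => z₀ * Real.exp (-c * t) := funext hzdef
    have h1 : HasDerivAt (fun t : ℝ => -c * t) (-c) t := by
      simpa using (hasDerivAt_id t).const_mul (-c)
    have h2 := (h1.exp).const_mul z₀
    rw [hz]
    refine h2.congr_deriv ?_
    rw [hdot t, hz]; ring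
  · rw [hzdef 0]; simp
  · have hz : z = fun t => z₀ * Real.exp (-c * t) := funext hzdef
    rw [hz]
    have hm : Tendsto (fun t : ℝ => -c * t) atTop atBot :=
      tendsto_id.const_mul_atTop_of_neg (neg_neg_iff_pos.mpr hcpos)
    have := (Real.tendsto_exp_atBot.comp hm).const_mul z₀
    simpa using this
  · -- integral
    have hcost : ∀ t, q * (z t) ^ 2 + u t ⬝ᵥ R.mulVec (u t)
        = (2 * q * z₀ ^ 2) * Real.exp (-(2 * c) * t) := by
      intro t
      have hu : u t ⬝ᵥ R.mulVec (u t) = q * (z t) ^ 2 := by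
        rw [hudef t, Matrix.mulVec_smul, dotProduct_smul, smul_dotProduct,
          smul_eq_mul, smul_eq_mul, hwRw]
        have : -k * z t * (-k * z t * s) = (k * k) * s * (z t) ^ 2 := by ring
        rw [this, hk2]
        field_simp
      rw [hu, hzdef t]
      rw [show ((-(2 * c)) * t) = (-c * t) + (-c * t) by ring, Real.exp_add]
      ring
    rw [MeasureTheory.integral_Ici_eq_integral_Ioi]
    simp only [hcost]
    rw [MeasureTheory.integral_const_mul, integral_exp_neg_mul_Ioi_zero (by linarith : (0:ℝ) < 2 * c)]
    have : 2 * q * z₀ ^ 2 * (1 / (2 * c)) = (q / c) * z₀ ^ 2 := by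
      field_simp
    rw [this]
    have hqc : q / c = k := by
      field_simp [← hck]
      exact hck.symm
    rw [hqc]
end

section
/- Existence and uniqueness of the algebraic Riccati solution for the integrator LQR: Let n ≥ 1 and let Q and R be n×n real symmetric positive definite matrices. Then there exists a unique n×n real symmetric positive definite matrix P satisfying P R⁻¹ P = Q. -/
open Matrix
open scoped MatrixOrder

private lemma conj_posDef {m : Type*} [Fintype m] [DecidableEq m]
    {A B : Matrix m m ℝ} (hA : A.PosDef) (hB : IsUnit B.det) :
    (Bᴴ * A * B).PosDef := by
  exact hA.conjTranspose_mul_mul_same (Matrix.mulVec_injective_iff_isUnit.mpr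
    ((Matrix.isUnit_iff_isUnit_det B).mpr hB))

private lemma posDef_of_posSemidef_isUnit {m : Type*} [Fintype m] [DecidableEq m]
    {M : Matrix m m ℝ} (hM : M.PosSemidef) (hd : IsUnit M.det) : M.PosDef := by
  have hT : CFC.sqrt M * CFC.sqrt M = M := CFC.sqrt_mul_sqrt_self M hM.nonneg
  have hTd : IsUnit (CFC.sqrt M).det := by
    have : (CFC.sqrt M).det * (CFC.sqrt M).det = M.det := by rw [← Matrix.det_mul, hT]
    exact isUnit_of_mul_isUnit_left (this ▸ hd)
  have := conj_posDef (Matrix.PosDef.one) hTd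
  rwa [Matrix.mul_one, (CFC.sqrt_nonneg M).posSemidef.isHermitian.eq, hT] at this

private lemma isSymm_of_posDef {m : Type*} [Fintype m]
    {M : Matrix m m ℝ} (hM : M.PosDef) : M.IsSymm := by
  have := hM.isHermitian
  rwa [Matrix.IsHermitian, Matrix.conjTranspose_eq_transpose_of_trivial] at this

/-- Existence and uniqueness of the algebraic Riccati solution for the
integrator LQR: for `Q`, `R` real symmetric positive definite `n × n`
matrices, there is a unique symmetric positive definite `P` with
`P R⁻¹ P = Q`. -/
theorem riccati_integrator_exists_unique
    (n : ℕ) (hn : 1 ≤ n)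
    (Q R : Matrix (Fin n) (Fin n) ℝ)
    (hQ : Q.PosDef) (hQsymm : Q.IsSymm)
    (hR : R.PosDef) (hRsymm : R.IsSymm) :
    ∃! P : Matrix (Fin n) (Fin n) ℝ,
      P.PosDef ∧ P.IsSymm ∧ P * R⁻¹ * P = Q := by
  -- S = R⁻¹ is positive definite
  have hS : (R⁻¹).PosDef := hR.inv
  -- T = sqrt of S
  obtain ⟨T, hTsd, hTT⟩ : ∃ T : Matrix (Fin n) (Fin n) ℝ,
      T.PosSemidef ∧ T * T = R⁻¹ :=
    ⟨CFC.sqrt R⁻¹, (CFC.sqrt_nonneg _).posSemidef, CFC.sqrt_mul_sqrt_self _ hS.posSemidef.nonneg⟩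
  have hTherm : T.IsHermitian := hTsd.isHermitian
  have hTd : IsUnit T.det := by
    have h1 : T.det * T.det = (R⁻¹).det := by rw [← Matrix.det_mul, hTT]
    exact isUnit_of_mul_isUnit_left (h1 ▸ hS.det_pos.ne'.isUnit)
  -- M = T * Q * T is positive definite
  have hM : (T * Q * T).PosDef := by
    have := conj_posDef hQ hTd
    rwa [hTherm.eq] at this
  -- uniqueness of positive semidefinite square roots of T * Q * T
  have huniq : ∀ B C : Matrix (Fin n) (Fin n) ℝ, B.PosSemidef → C.PosSemidef →
      B * B = T * Q * T → C * C = T * Q * T → B = C := by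
    intro B C hB hC h1 h2
    rw [← CFC.sqrt_unique h1 hB.nonneg,
      ← CFC.sqrt_unique h2 hC.nonneg]
  -- N = sqrt of M
  obtain ⟨N, hNsd, hNN⟩ : ∃ N : Matrix (Fin n) (Fin n) ℝ,
      N.PosSemidef ∧ N * N = T * Q * T :=
    ⟨CFC.sqrt (T * Q * T), (CFC.sqrt_nonneg _).posSemidef, CFC.sqrt_mul_sqrt_self _ hM.posSemidef.nonneg⟩
  have hNd : IsUnit N.det := by
    have h1 : N.det * N.det = (T * Q * T).det := by rw [← Matrix.det_mul, hNN]
    exact isUnit_of_mul_isUnit_left (h1 ▸ hM.det_pos.ne'.isUnit)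
  have hNpos : N.PosDef := posDef_of_posSemidef_isUnit hNsd hNd
  have hTinv : T⁻¹ * T = 1 := Matrix.nonsing_inv_mul T hTd
  have hTinv' : T * T⁻¹ = 1 := Matrix.mul_nonsing_inv T hTd
  have hTinvherm : (T⁻¹).IsHermitian := (posDef_of_posSemidef_isUnit hTsd hTd).inv.isHermitian
  -- The canonical P
  have hPpos : (T⁻¹ * N * T⁻¹).PosDef := by
    have := conj_posDef hNpos (Matrix.isUnit_nonsing_inv_det T hTd)
    rwa [hTinvherm.eq] at this
  have sandwich : ∀ X : Matrix (Fin n) (Fin n) ℝ, T⁻¹ * (T * X * T) * T⁻¹ = X := by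
    intro X
    calc T⁻¹ * (T * X * T) * T⁻¹ = (T⁻¹ * T) * X * (T * T⁻¹) := by
          simp only [Matrix.mul_assoc]
      _ = X := by rw [hTinv, hTinv', one_mul, mul_one]
  have key : ∀ P' : Matrix (Fin n) (Fin n) ℝ, P'.PosDef → P' * R⁻¹ * P' = Q →
      P' = T⁻¹ * N * T⁻¹ := by
    intro P' hP' hEq
    have hsq : (T * P' * T) * (T * P' * T) = T * Q * T := by
      calc T * P' * T * (T * P' * T) = T * (P' * (T * T) * P') * T := by
            simp only [Matrix.mul_assoc]
        _ = T * Q * T := by rw [hTT, hEq]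
    have hTPT : (T * P' * T).PosSemidef := by
      have := conj_posDef hP' hTd
      rw [hTherm.eq] at this
      exact this.posSemidef
    have hEqN : T * P' * T = N := huniq _ _ hTPT hNsd hsq hNN
    rw [← hEqN, sandwich]
  refine ⟨T⁻¹ * N * T⁻¹, ⟨hPpos, isSymm_of_posDef hPpos, ?_⟩,
    fun P' h => key P' h.1 h.2.2⟩
  have h1 : T⁻¹ * N * T⁻¹ * R⁻¹ * (T⁻¹ * N * T⁻¹) = T⁻¹ * (N * N) * T⁻¹ := by
    rw [← hTT]
    calc T⁻¹ * N * T⁻¹ * (T * T) * (T⁻¹ * N * T⁻¹)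
        = T⁻¹ * (N * ((T⁻¹ * T) * ((T * T⁻¹) * N))) * T⁻¹ := by
          simp only [Matrix.mul_assoc]
      _ = T⁻¹ * (N * N) * T⁻¹ := by rw [hTinv, hTinv', one_mul, one_mul]
  rw [h1, hNN, sandwich]
end
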